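/- Let P be a labeled oriented tree whose maximal proper sub-LOTs T₁, …, Tₙ are pairwise disjoint, let T = T₁ ∪ … ∪ Tₙ, and assume P is injective relative to T. Let Q be a reorientation of P in which only edges of P − T are reversed, and let S be the set of labels of the reversed edges (so each element of S occurs exactly once as an edge label in P). Let P = P(P), Q = P(Q), and let P_S be the presentation obtained from P by replacing, in every relator, each occurrence x by x^{-1} and each occurrence x^{-1} by x for every x ∈ S. Then the Whitehead graphs W(P_S) and W(Q) are equal, and moreover W((P/T)_S) and W(Q/T) are equal. -/

import Mathlib

/-- A labeled oriented graph (LOG): each edge `e` has an initial vertex `init e`,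
a terminal vertex `term e`, and a label `label e`, which is a vertex.
An edge `e = [x,z,y]` has `init e = x`, `label e = z`, `term e = y`. -/
structure LOG (V E : Type) where
  init : E → V
  label : E → V
  term : E → V

namespace LOG

variable {V E : Type}

/-- The underlying simple graph of a LOG. -/
def graph (G : LOG V E) : SimpleGraph V :=
  SimpleGraph.fromRel fun a b => ∃ e, G.init e = a ∧ G.term e = b

/-- The underlying unoriented multigraph is a tree: there are no loops, distinct
edges have distinct endpoint pairs, and the underlying simple graph is a tree. -/
def IsTreeGraph (G : LOG V E) : Prop :=
  (∀ e, G.init e ≠ G.term e) ∧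
    Function.Injective (fun e => s(G.init e, G.term e)) ∧ G.graph.IsTree

/-- A LOG is injective if each vertex occurs at most once as an edge label. -/
def InjectiveLabels (G : LOG V E) : Prop := Function.Injective G.label

/-- The simple graph induced by a subgraph, given by a vertex set `VS` and an edge set `ES`. -/
def subgraph (G : LOG V E) (VS : Set V) (ES : Set E) : SimpleGraph VS :=
  SimpleGraph.fromRel fun a b => ∃ e ∈ ES, G.init e = (a : V) ∧ G.term e = (b : V)

/-- A sub-LOT: a connected subgraph containing at least one edge, all of whose
edge labels are vertices of the subgraph. -/
structure IsSubLOT (G : LOG V E) (VS : Set V) (ES : Set E) : Prop where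
  edge_nonempty : ES.Nonempty
  init_mem : ∀ e ∈ ES, G.init e ∈ VS
  term_mem : ∀ e ∈ ES, G.term e ∈ VS
  label_mem : ∀ e ∈ ES, G.label e ∈ VS
  connected : (G.subgraph VS ES).Connected

end LOG

namespace LOG

variable {V E : Type}

/-- A proper sub-LOT: a sub-LOT that is not all of `G`. -/
def IsProperSubLOT (G : LOG V E) (VS : Set V) (ES : Set E) : Prop :=
  G.IsSubLOT VS ES ∧ ¬(VS = Set.univ ∧ ES = Set.univ)

/-- A maximal proper sub-LOT: a proper sub-LOT not properly contained in any
other proper sub-LOT. -/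
def IsMaxProperSubLOT (G : LOG V E) (VS : Set V) (ES : Set E) : Prop :=
  G.IsProperSubLOT VS ES ∧
    ∀ VS' ES', G.IsProperSubLOT VS' ES' → VS ⊆ VS' → ES ⊆ ES' → VS = VS' ∧ ES = ES'

end LOG

/-- A multigraph: each element of the edge index type `E` has two (possibly equal)
endpoints in `V`; loops and multiple edges are allowed. -/
structure Multigraph (V E : Type) where
  fst : E → V
  snd : E → V

namespace Multigraph

variable {V E : Type}

/-- The initial vertex of a dart (an edge together with an orientation). -/
def dstart (G : Multigraph V E) (d : E × Bool) : V := if d.2 then G.fst d.1 else G.snd d.1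

/-- The final vertex of a dart. -/
def dfin (G : Multigraph V E) (d : E × Bool) : V := if d.2 then G.snd d.1 else G.fst d.1

/-- An edge cycle: a nonempty list of darts in which consecutive darts match up, cyclically. -/
def IsCycle (G : Multigraph V E) (c : List (E × Bool)) : Prop :=
  c ≠ [] ∧ List.Chain' (fun d d' => G.dfin d = G.dstart d') c ∧
    ∀ h : c ≠ [], G.dfin (c.getLast h) = G.dstart (c.head h)

/-- A cycle is homology reduced relative to an edge set `E₀` if it does not contain a
pair of darts, with underlying edge outside `E₀`, that are reverses of each other. -/
def HomReducedRel (E₀ : Set E) (c : List (E × Bool)) : Prop :=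
  ∀ d ∈ c, d.1 ∉ E₀ → (d.1, !d.2) ∉ c

/-- A cycle is homology reduced if it does not contain a dart together with its reverse. -/
def HomReduced (c : List (E × Bool)) : Prop := HomReducedRel (∅ : Set E) c

/-- `G` is a forest relative to the subgraph with edge set `E₀`: every cycle which is
homology reduced relative to `E₀` is contained in `E₀`. -/
def IsForestRel (G : Multigraph V E) (E₀ : Set E) : Prop :=
  ∀ c, G.IsCycle c → HomReducedRel E₀ c → ∀ d ∈ c, d.1 ∈ E₀

/-- A forest: there is no nonempty homology reduced cycle. -/
def IsForest (G : Multigraph V E) : Prop := G.IsForestRel ∅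

/-- Two vertices are adjacent if they are the two endpoints of some edge. -/
def Adj (G : Multigraph V E) (v w : V) : Prop :=
  ∃ e, (G.fst e = v ∧ G.snd e = w) ∨ (G.fst e = w ∧ G.snd e = v)

/-- A multigraph is connected if any two vertices are joined by an edge path. -/
def Connected (G : Multigraph V E) : Prop := ∀ v w, Relation.ReflTransGen G.Adj v w

/-- A tree: connected and a forest. -/
def IsTree (G : Multigraph V E) : Prop := G.Connected ∧ G.IsForest

/-- A tree relative to the subgraph with edge set `E₀`. -/
def IsTreeRel (G : Multigraph V E) (E₀ : Set E) : Prop := G.Connected ∧ G.IsForestRel E₀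

/-- Reachability inside the subgraph with edge set `E₀`. -/
def ReachIn (G : Multigraph V E) (E₀ : Set E) : V → V → Prop :=
  Relation.ReflTransGen fun a b =>
    ∃ e ∈ E₀, (G.fst e = a ∧ G.snd e = b) ∨ (G.fst e = b ∧ G.snd e = a)

end Multigraph

/-- A word in generators `X` and their inverses: a letter `(x, true)` is `x`,
a letter `(x, false)` is `x⁻¹`. -/
abbrev Word (X : Type) := List (X × Bool)

/-- The total exponent sum of a word. -/
def expSum {X : Type} (w : Word X) : ℤ := (w.map fun l => if l.2 then (1 : ℤ) else -1).sum

/-- A word is cyclically reduced: it is reduced and its last letter is not the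
inverse of its first letter. -/
def IsCyclicallyReduced {X : Type} (w : Word X) : Prop :=
  List.Chain' (fun l l' => ¬(l.1 = l'.1 ∧ l.2 = !l'.2)) w ∧
    ∀ h : w ≠ [], ¬((w.getLast h).1 = (w.head h).1 ∧ (w.getLast h).2 = !(w.head h).2)

/-- The corners of a family of relator words: one for each position in each relator. -/
def Corners {X ι : Type} (rel : ι → Word X) : Type := Σ j : ι, Fin (rel j).length

/-- The Whitehead graph of a family of relator words, as a multigraph on the vertex set
`{x⁺, x⁻ : x ∈ X}`, where `x⁺ = (x, true)` and `x⁻ = (x, false)`: each occurrence of a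
cyclic subword `a^ε b^δ` contributes a corner joining `a⁻` (if `ε = 1`) or `a⁺`
(if `ε = -1`) to `b⁺` (if `δ = 1`) or `b⁻` (if `δ = -1`). -/
def whitehead {X ι : Type} (rel : ι → Word X) : Multigraph (X × Bool) (Corners rel) where
  fst d := (((rel d.1).get d.2).1, !((rel d.1).get d.2).2)
  snd d := (rel d.1).get ⟨((d.2 : ℕ) + 1) % (rel d.1).length, Nat.mod_lt _ d.2.pos⟩

/-- The corners with both endpoints positive vertices. -/
def posCorners {X ι : Type} (rel : ι → Word X) : Set (Corners rel) :=
  { d | ((whitehead rel).fst d).2 = true ∧ ((whitehead rel).snd d).2 = true }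

/-- The corners with both endpoints negative vertices. -/
def negCorners {X ι : Type} (rel : ι → Word X) : Set (Corners rel) :=
  { d | ((whitehead rel).fst d).2 = false ∧ ((whitehead rel).snd d).2 = false }

/-- The positive graph `W⁺`: the full subgraph of the Whitehead graph on the
positive vertices `x⁺`, viewed as a multigraph on `X`. -/
def Wpos {X ι : Type} (rel : ι → Word X) : Multigraph X (posCorners rel) where
  fst d := ((whitehead rel).fst d.1).1
  snd d := ((whitehead rel).snd d.1).1

/-- The negative graph `W⁻`: the full subgraph of the Whitehead graph on the
negative vertices `x⁻`, viewed as a multigraph on `X`. -/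
def Wneg {X ι : Type} (rel : ι → Word X) : Multigraph X (negCorners rel) where
  fst d := ((whitehead rel).fst d.1).1
  snd d := ((whitehead rel).snd d.1).1

/-- A presentation with relator family `rel` satisfies the Stallings test relative to the
sub-presentation whose relators are indexed by `ιT`: every relator has exponent sum zero,
and `W⁺` or `W⁻` is a forest relative to the corresponding subgraph of corners coming
from relators indexed by `ιT`. -/
def StallingsRel {X ι : Type} (rel : ι → Word X) (ιT : Set ι) : Prop :=
  (∀ j, expSum (rel j) = 0) ∧
    ((Wpos rel).IsForestRel { d : posCorners rel | (d : Corners rel).1 ∈ ιT } ∨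
     (Wneg rel).IsForestRel { d : negCorners rel | (d : Corners rel).1 ∈ ιT })

/-- The words in the generators of `Xs` and their inverses with exponent sum zero
(not necessarily reduced). -/
def ZWords {X : Type} (Xs : Set X) : Type :=
  { w : Word X // (∀ l ∈ w, l.1 ∈ Xs) ∧ expSum w = 0 }

/-- The relator family of the presentation `P/T`: the relators of `P` together with,
for each `i`, all words of exponent sum zero in the generators of `Tᵢ`. -/
def relPTgen {X ι : Type} {n : ℕ} (rel : ι → Word X) (XS : Fin n → Set X) :
    ι ⊕ (Σ i : Fin n, ZWords (XS i)) → Word X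
  | Sum.inl j => rel j
  | Sum.inr w => w.2.1

namespace LOG

variable {V E : Type}

/-- The relator word `x z y⁻¹ z⁻¹` of an edge `e = [x,z,y]`. -/
def relWord (G : LOG V E) (e : E) : Word V :=
  [(G.init e, true), (G.label e, true), (G.term e, false), (G.label e, false)]

/-- `P` is injective relative to the family of pairwise disjoint sub-LOTs `Tᵢ = (VS i, ES i)`:
after replacing each edge label lying in `Tᵢ` by a chosen vertex `tᵢ ∈ Tᵢ` and collapsing
each `Tᵢ` to `tᵢ` (encoded by the collapsing map `π`), each vertex occurs at most once
as an edge label. -/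
def RelInjective {n : ℕ} (P : LOG V E) (VS : Fin n → Set V) (ES : Fin n → Set E) : Prop :=
  ∀ π : V → V, (∀ v, (∀ i, v ∉ VS i) → π v = v) → (∀ i, ∃ t ∈ VS i, ∀ v ∈ VS i, π v = t) →
    ∀ e f : E, e ∉ (⋃ i, ES i) → f ∉ (⋃ i, ES i) → π (P.label e) = π (P.label f) → e = f

end LOG

/-- `Q` is a reorientation of `G`: `Q` is obtained from `G` by reversing the orientation
of each edge in some subset of the edges, keeping all labels. -/
def IsReorientation {V E : Type} (G Q : LOG V E) : Prop :=
  Q.label = G.label ∧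
    ∀ e, (Q.init e = G.init e ∧ Q.term e = G.term e) ∨
      (Q.init e = G.term e ∧ Q.term e = G.init e)

/-- Replace, in a word, each occurrence `x` by `x⁻¹` and `x⁻¹` by `x`, for every `x ∈ S`. -/
noncomputable def flipWord {X : Type} (S : Set X) (w : Word X) : Word X :=
  w.map fun l => @ite _ (l.1 ∈ S) (Classical.dec _) (l.1, !l.2) l

/-- Two multigraphs on the same vertex set are equal as multigraphs if there is a
bijection between their edge sets preserving (unordered) endpoints. -/
def MGEquiv {V E₁ E₂ : Type} (G₁ : Multigraph V E₁) (G₂ : Multigraph V E₂) : Prop :=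
  ∃ σ : E₁ ≃ E₂, ∀ e, s(G₂.fst (σ e), G₂.snd (σ e)) = s(G₁.fst e, G₁.snd e)


section AUX
variable {V X ι : Type}

theorem mgequiv_of_fiber {E₁ E₂ : Type} (G₁ : Multigraph V E₁) (G₂ : Multigraph V E₂)
    (h : ∀ p : Sym2 V, Nonempty
      ({e // s(G₁.fst e, G₁.snd e) = p} ≃ {e // s(G₂.fst e, G₂.snd e) = p})) :
    MGEquiv G₁ G₂ := by
  classical
  refine ⟨((Equiv.sigmaFiberEquiv fun e => s(G₁.fst e, G₁.snd e)).symm.trans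
    ((Equiv.sigmaCongrRight fun p => (h p).some).trans
      (Equiv.sigmaFiberEquiv fun e => s(G₂.fst e, G₂.snd e)))), ?_⟩
  intro e
  simp only [Equiv.trans_apply]
  have h1 : (Equiv.sigmaFiberEquiv fun e => s(G₁.fst e, G₁.snd e)).symm e
      = ⟨s(G₁.fst e, G₁.snd e), ⟨e, rfl⟩⟩ := rfl
  rw [h1]
  exact (((h _).some ⟨e, rfl⟩)).2

/-- corners of a sum family split -/
def cornersSumEquiv {ι₂ : Type} (r₁ : ι → Word X) (r₂ : ι₂ → Word X) :
    Corners (Sum.elim r₁ r₂) ≃ Corners r₁ ⊕ Corners r₂ where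
  toFun d := match d with
    | ⟨.inl j, i⟩ => .inl ⟨j, i⟩
    | ⟨.inr j, i⟩ => .inr ⟨j, i⟩
  invFun d := match d with
    | .inl ⟨j, i⟩ => ⟨.inl j, i⟩
    | .inr ⟨j, i⟩ => ⟨.inr j, i⟩
  left_inv := by rintro ⟨(j | j), i⟩ <;> rfl
  right_inv := by rintro (⟨j, i⟩ | ⟨j, i⟩) <;> rfl

theorem mgequiv_whitehead_sum {ι₂ : Type} {r₁ r₁' : ι → Word X} {r₂ r₂' : ι₂ → Word X}
    (h₁ : MGEquiv (whitehead r₁) (whitehead r₁'))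
    (h₂ : MGEquiv (whitehead r₂) (whitehead r₂')) :
    MGEquiv (whitehead (Sum.elim r₁ r₂)) (whitehead (Sum.elim r₁' r₂')) := by
  obtain ⟨σ₁, hσ₁⟩ := h₁
  obtain ⟨σ₂, hσ₂⟩ := h₂
  refine ⟨(cornersSumEquiv r₁ r₂).trans ((σ₁.sumCongr σ₂).trans (cornersSumEquiv r₁' r₂').symm), ?_⟩
  rintro ⟨(j | j), i⟩
  · exact hσ₁ ⟨j, i⟩
  · exact hσ₂ ⟨j, i⟩

end AUX

section P2
variable {V : Type} {n : ℕ}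

noncomputable def flipL (S : Set V) (l : V × Bool) : V × Bool :=
  @ite _ (l.1 ∈ S) (Classical.dec _) (l.1, !l.2) l

lemma flipWord_eq_map (S : Set V) (w : Word V) : flipWord S w = w.map (flipL S) := rfl

lemma flipL_fst (S : Set V) (l : V × Bool) : (flipL S l).1 = l.1 := by
  unfold flipL; split <;> rfl

lemma flipL_invol (S : Set V) : Function.Involutive (flipL S) := by
  intro l; by_cases h : l.1 ∈ S <;> simp [flipL, h]

lemma sym2_flip_invol (S : Set V) : Function.Involutive (Sym2.map (flipL S)) := by
  intro q
  rw [Sym2.map_map]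
  have : (flipL S) ∘ (flipL S) = id := funext fun l => flipL_invol S l
  rw [this, Sym2.map_id]
  rfl

lemma expSum_cons (l : V × Bool) (w : Word V) :
    expSum (l :: w) = (if l.2 then (1:ℤ) else -1) + expSum w := by simp [expSum]

lemma expSum_append (w₁ w₂ : Word V) : expSum (w₁ ++ w₂) = expSum w₁ + expSum w₂ := by
  simp [expSum]

lemma expSum_replicate (k : ℕ) (l : V × Bool) :
    expSum (List.replicate k l) = k * (if l.2 then (1:ℤ) else -1) := by
  induction k with
  | zero => simp [expSum]
  | succ m ih => rw [List.replicate_succ, expSum_cons, ih]; push_cast; ring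

/-- The test word realizing a given corner, with padding of size `k`. -/
def tw (u v : V) (eu ev : Bool) (k : ℕ) : Word V :=
  (u, !eu) :: (v, ev) :: (u, eu) :: (v, !ev) ::
    (List.replicate k (u, eu) ++ List.replicate k (u, !eu))

lemma tw_length (u v : V) (eu ev : Bool) (k : ℕ) : (tw u v eu ev k).length = 4 + 2 * k := by
  simp [tw]; ring

lemma tw_expSum (u v : V) (eu ev : Bool) (k : ℕ) : expSum (tw u v eu ev k) = 0 := by
  simp only [tw, expSum_cons, expSum_append, expSum_replicate]
  cases eu <;> cases ev <;> simp

lemma tw_mem (Xs : Set V) (u v : V) (eu ev : Bool) (k : ℕ) (hu : u ∈ Xs) (hv : v ∈ Xs) :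
    ∀ l ∈ tw u v eu ev k, l.1 ∈ Xs := by
  intro l hl
  simp only [tw, List.mem_cons, List.mem_append, List.mem_replicate] at hl
  rcases hl with rfl | rfl | rfl | rfl | (⟨-, rfl⟩ | ⟨-, rfl⟩) <;> simpa

lemma infinite_fiber {XS : Fin n → Set V} (q : Sym2 (V × Bool))
    (hC : ∃ i : Fin n, ∀ a ∈ q, a.1 ∈ XS i) :
    Infinite {d : Corners (fun w : (Σ i : Fin n, ZWords (XS i)) => w.2.1) //
      s((whitehead fun w : (Σ i : Fin n, ZWords (XS i)) => w.2.1).fst d,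
        (whitehead fun w : (Σ i : Fin n, ZWords (XS i)) => w.2.1).snd d) = q} := by
  revert hC
  induction q using Sym2.ind with
  | _ A B =>
    rintro ⟨i, hi⟩
    obtain ⟨u, eu⟩ := A
    obtain ⟨v, ev⟩ := B
    have hu : u ∈ XS i := hi (u, eu) (Sym2.mem_iff.mpr (Or.inl rfl))
    have hv : v ∈ XS i := hi (v, ev) (Sym2.mem_iff.mpr (Or.inr rfl))
    have hpos : ∀ k, 0 < (tw u v eu ev k).length := by
      intro k; rw [tw_length]; omega
    have hpair : ∀ k, s((whitehead fun w : (Σ i : Fin n, ZWords (XS i)) => w.2.1).fst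
        ⟨⟨i, ⟨tw u v eu ev k, tw_mem _ u v eu ev k hu hv, tw_expSum u v eu ev k⟩⟩, ⟨0, hpos k⟩⟩,
        (whitehead fun w : (Σ i : Fin n, ZWords (XS i)) => w.2.1).snd
        ⟨⟨i, ⟨tw u v eu ev k, tw_mem _ u v eu ev k hu hv, tw_expSum u v eu ev k⟩⟩, ⟨0, hpos k⟩⟩)
        = s((u, eu), (v, ev)) := by
      intro k
      have hmod : (0 + 1) % (tw u v eu ev k).length = 1 := by
        rw [tw_length, Nat.mod_eq_of_lt (by omega)]
      simp [whitehead, hmod, tw]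
    refine Infinite.of_injective (fun k : ℕ =>
      ⟨⟨⟨i, ⟨tw u v eu ev k, tw_mem _ u v eu ev k hu hv, tw_expSum u v eu ev k⟩⟩, ⟨0, hpos k⟩⟩,
        hpair k⟩) ?_
    intro k k' h
    have hlen := congrArg (fun d : {d : Corners (fun w : (Σ i : Fin n, ZWords (XS i)) => w.2.1) //
        s((whitehead fun w : (Σ i : Fin n, ZWords (XS i)) => w.2.1).fst d,
          (whitehead fun w : (Σ i : Fin n, ZWords (XS i)) => w.2.1).snd d)
          = s((u, eu), (v, ev))} => (d.1.1.2.1.length)) h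
    simp only [tw_length] at hlen
    omega

lemma empty_fiber {XS : Fin n → Set V} (q : Sym2 (V × Bool))
    (hC : ¬ ∃ i : Fin n, ∀ a ∈ q, a.1 ∈ XS i) :
    IsEmpty {d : Corners (fun w : (Σ i : Fin n, ZWords (XS i)) => w.2.1) //
      s((whitehead fun w : (Σ i : Fin n, ZWords (XS i)) => w.2.1).fst d,
        (whitehead fun w : (Σ i : Fin n, ZWords (XS i)) => w.2.1).snd d) = q} := by
  constructor
  rintro ⟨⟨⟨i, w⟩, pos⟩, hp⟩
  refine hC ⟨i, ?_⟩
  intro a ha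
  rw [← hp] at ha
  rcases Sym2.mem_iff.mp ha with h | h <;> subst h <;> simp only [whitehead] <;>
    exact w.2.1 _ (List.get_mem _ _)

end P2

section P2B
variable {V : Type} {n : ℕ}

lemma flipL_corner (S : Set V) (a : V × Bool) :
    ((flipL S a).1, !(flipL S a).2) = flipL S (a.1, !a.2) := by
  by_cases h : a.1 ∈ S <;> simp [flipL, h]

lemma pair_flip {XS : Fin n → Set V} (S : Set V)
    (w : Σ i : Fin n, ZWords (XS i)) (iv : ℕ)
    (hi : iv < ((fun w : (Σ i : Fin n, ZWords (XS i)) => flipWord S w.2.1) w).length)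
    (hi' : iv < ((fun w : (Σ i : Fin n, ZWords (XS i)) => w.2.1) w).length) :
    s((whitehead fun w : (Σ i : Fin n, ZWords (XS i)) => flipWord S w.2.1).fst ⟨w, ⟨iv, hi⟩⟩,
      (whitehead fun w : (Σ i : Fin n, ZWords (XS i)) => flipWord S w.2.1).snd ⟨w, ⟨iv, hi⟩⟩) =
      Sym2.map (flipL S)
        (s((whitehead fun w : (Σ i : Fin n, ZWords (XS i)) => w.2.1).fst ⟨w, ⟨iv, hi'⟩⟩,
          (whitehead fun w : (Σ i : Fin n, ZWords (XS i)) => w.2.1).snd ⟨w, ⟨iv, hi'⟩⟩)) := by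
  simp only [whitehead, Sym2.map_pair_eq, flipWord_eq_map, List.get_eq_getElem,
    List.getElem_map, List.length_map, flipL_corner]

theorem part_inr [Countable V] (S : Set V) (XS : Fin n → Set V) :
    MGEquiv (whitehead fun w : (Σ i : Fin n, ZWords (XS i)) => flipWord S w.2.1)
      (whitehead fun w : (Σ i : Fin n, ZWords (XS i)) => w.2.1) := by
  classical
  apply mgequiv_of_fiber
  intro p
  let cL : Corners (fun w : (Σ i : Fin n, ZWords (XS i)) => flipWord S w.2.1)
      ≃ Corners (fun w : (Σ i : Fin n, ZWords (XS i)) => w.2.1) :=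
    ⟨fun d => ⟨d.1, ⟨d.2.1, by have := d.2.2; simpa [flipWord] using this⟩⟩,
     fun d => ⟨d.1, ⟨d.2.1, by have := d.2.2; simpa [flipWord] using this⟩⟩,
     fun d => by rcases d with ⟨w, ⟨iv, hi⟩⟩; rfl,
     fun d => by rcases d with ⟨w, ⟨iv, hi⟩⟩; rfl⟩
  have key : ∀ d, s((whitehead fun w : (Σ i : Fin n, ZWords (XS i)) => flipWord S w.2.1).fst d,
      (whitehead fun w : (Σ i : Fin n, ZWords (XS i)) => flipWord S w.2.1).snd d) =
      Sym2.map (flipL S)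
        (s((whitehead fun w : (Σ i : Fin n, ZWords (XS i)) => w.2.1).fst (cL d),
          (whitehead fun w : (Σ i : Fin n, ZWords (XS i)) => w.2.1).snd (cL d))) := by
    rintro ⟨w, ⟨iv, hi⟩⟩
    exact pair_flip S w iv hi _
  have e1 : {d : Corners (fun w : (Σ i : Fin n, ZWords (XS i)) => flipWord S w.2.1) //
        s((whitehead fun w : (Σ i : Fin n, ZWords (XS i)) => flipWord S w.2.1).fst d,
          (whitehead fun w : (Σ i : Fin n, ZWords (XS i)) => flipWord S w.2.1).snd d) = p}
      ≃ {d : Corners (fun w : (Σ i : Fin n, ZWords (XS i)) => w.2.1) //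
        s((whitehead fun w : (Σ i : Fin n, ZWords (XS i)) => w.2.1).fst d,
          (whitehead fun w : (Σ i : Fin n, ZWords (XS i)) => w.2.1).snd d)
          = Sym2.map (flipL S) p} := by
    refine cL.subtypeEquiv fun d => ?_
    rw [key d]
    constructor
    · rintro rfl; exact (sym2_flip_invol S _).symm
    · intro h
      have := congrArg (Sym2.map (flipL S)) h
      rwa [sym2_flip_invol S _] at this
  have hCiff : (∃ i : Fin n, ∀ a ∈ Sym2.map (flipL S) p, a.1 ∈ XS i)
      ↔ (∃ i : Fin n, ∀ a ∈ p, a.1 ∈ XS i) := by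
    constructor
    · rintro ⟨i, hi⟩
      refine ⟨i, fun a ha => ?_⟩
      have : flipL S a ∈ Sym2.map (flipL S) p := Sym2.mem_map.mpr ⟨a, ha, rfl⟩
      simpa [flipL_fst] using hi _ this
    · rintro ⟨i, hi⟩
      refine ⟨i, fun a ha => ?_⟩
      obtain ⟨b, hb, rfl⟩ := Sym2.mem_map.mp ha
      simpa [flipL_fst] using hi _ hb
  have e2 : {d : Corners (fun w : (Σ i : Fin n, ZWords (XS i)) => w.2.1) //
        s((whitehead fun w : (Σ i : Fin n, ZWords (XS i)) => w.2.1).fst d,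
          (whitehead fun w : (Σ i : Fin n, ZWords (XS i)) => w.2.1).snd d)
          = Sym2.map (flipL S) p}
      ≃ {d : Corners (fun w : (Σ i : Fin n, ZWords (XS i)) => w.2.1) //
        s((whitehead fun w : (Σ i : Fin n, ZWords (XS i)) => w.2.1).fst d,
          (whitehead fun w : (Σ i : Fin n, ZWords (XS i)) => w.2.1).snd d) = p} := by
    by_cases hC : ∃ i : Fin n, ∀ a ∈ p, a.1 ∈ XS i
    · have i1 : Infinite _ := infinite_fiber (XS := XS) (Sym2.map (flipL S) p) (hCiff.mpr hC)
      have i2 : Infinite _ := infinite_fiber (XS := XS) p hC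
      haveI : ∀ Xs : Set V, Countable (ZWords Xs) := fun Xs => by
        unfold ZWords; exact inferInstance
      haveI : Countable (Corners (fun w : (Σ i : Fin n, ZWords (XS i)) => w.2.1)) := by
        unfold Corners; exact inferInstance
      haveI d1 := Classical.choice <| nonempty_denumerable
        {d : Corners (fun w : (Σ i : Fin n, ZWords (XS i)) => w.2.1) //
          s((whitehead fun w : (Σ i : Fin n, ZWords (XS i)) => w.2.1).fst d,
            (whitehead fun w : (Σ i : Fin n, ZWords (XS i)) => w.2.1).snd d)
            = Sym2.map (flipL S) p}
      haveI d2 := Classical.choice <| nonempty_denumerable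
        {d : Corners (fun w : (Σ i : Fin n, ZWords (XS i)) => w.2.1) //
          s((whitehead fun w : (Σ i : Fin n, ZWords (XS i)) => w.2.1).fst d,
            (whitehead fun w : (Σ i : Fin n, ZWords (XS i)) => w.2.1).snd d) = p}
      exact (@Denumerable.eqv _ d1).trans (@Denumerable.eqv _ d2).symm
    · have i1 := empty_fiber (XS := XS) (Sym2.map (flipL S) p) (by rwa [hCiff])
      have i2 := empty_fiber (XS := XS) p hC
      exact @Equiv.equivOfIsEmpty _ _ i1 i2
  exact ⟨e1.trans e2⟩

end P2B

section P1
variable {V E : Type}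

def tbl4 (a b c d : Fin 4) : Fin 4 → Fin 4
  | ⟨0,_⟩ => a
  | ⟨1,_⟩ => b
  | ⟨2,_⟩ => c
  | ⟨3,_⟩ => d

def mkP4 (f g : Fin 4 → Fin 4) (h1 : Function.LeftInverse g f)
    (h2 : Function.RightInverse g f) : Equiv.Perm (Fin 4) := ⟨f, g, h1, h2⟩

def perm4 : Bool → Bool → Bool → Equiv.Perm (Fin 4)
  | false, false, false => Equiv.refl _
  | false, false, true  => mkP4 (tbl4 ⟨0, by omega⟩ ⟨2, by omega⟩ ⟨1, by omega⟩ ⟨3, by omega⟩) (tbl4 ⟨0, by omega⟩ ⟨2, by omega⟩ ⟨1, by omega⟩ ⟨3, by omega⟩) (by decide) (by decide)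
  | false, true , false => mkP4 (tbl4 ⟨3, by omega⟩ ⟨1, by omega⟩ ⟨2, by omega⟩ ⟨0, by omega⟩) (tbl4 ⟨3, by omega⟩ ⟨1, by omega⟩ ⟨2, by omega⟩ ⟨0, by omega⟩) (by decide) (by decide)
  | false, true , true  => mkP4 (tbl4 ⟨3, by omega⟩ ⟨2, by omega⟩ ⟨1, by omega⟩ ⟨0, by omega⟩) (tbl4 ⟨3, by omega⟩ ⟨2, by omega⟩ ⟨1, by omega⟩ ⟨0, by omega⟩) (by decide) (by decide)
  | true , false, false => mkP4 (tbl4 ⟨1, by omega⟩ ⟨0, by omega⟩ ⟨3, by omega⟩ ⟨2, by omega⟩) (tbl4 ⟨1, by omega⟩ ⟨0, by omega⟩ ⟨3, by omega⟩ ⟨2, by omega⟩) (by decide) (by decide)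
  | true , false, true  => mkP4 (tbl4 ⟨1, by omega⟩ ⟨3, by omega⟩ ⟨0, by omega⟩ ⟨2, by omega⟩) (tbl4 ⟨2, by omega⟩ ⟨0, by omega⟩ ⟨3, by omega⟩ ⟨1, by omega⟩) (by decide) (by decide)
  | true , true , false => mkP4 (tbl4 ⟨2, by omega⟩ ⟨0, by omega⟩ ⟨3, by omega⟩ ⟨1, by omega⟩) (tbl4 ⟨1, by omega⟩ ⟨3, by omega⟩ ⟨0, by omega⟩ ⟨2, by omega⟩) (by decide) (by decide)
  | true , true , true  => mkP4 (tbl4 ⟨2, by omega⟩ ⟨3, by omega⟩ ⟨0, by omega⟩ ⟨1, by omega⟩) (tbl4 ⟨2, by omega⟩ ⟨3, by omega⟩ ⟨0, by omega⟩ ⟨1, by omega⟩) (by decide) (by decide)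

set_option maxHeartbeats 4000000 in
theorem part1 (P Q : LOG V E) (S : Set V)
    (hreor : IsReorientation P Q)
    (hS : S = P.label '' { e | ¬(Q.init e = P.init e ∧ Q.term e = P.term e) })
    (hSonce : ∀ x ∈ S, ∃! e, P.label e = x) :
    MGEquiv (whitehead fun e => flipWord S (P.relWord e)) (whitehead Q.relWord) := by
  classical
  have hlab : ∀ e, Q.label e = P.label e := fun e => congrFun hreor.1 e
  have hcase : ∀ e, (P.label e ∈ S → Q.init e = P.term e ∧ Q.term e = P.init e) ∧
      (P.label e ∉ S → Q.init e = P.init e ∧ Q.term e = P.term e) := by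
    intro e
    constructor
    · intro hr
      obtain ⟨g, hg, hge⟩ := by rw [hS] at hr; exact hr
      obtain ⟨f, _, hf⟩ := hSonce _ hr
      have hge' : g = e := (hf g hge).trans (hf e rfl).symm
      subst hge'
      rcases hreor.2 g with h | h
      · exact absurd h hg
      · exact h
    · intro hr
      rcases hreor.2 e with h | h
      · exact h
      · by_contra hne
        exact hr (hS ▸ ⟨e, by simpa [Set.mem_setOf_eq] using hne, rfl⟩)
  have db : ∀ (p : Prop), p → (@decide p (Classical.propDecidable p)) = true :=
    fun p hp => @decide_eq_true p (Classical.propDecidable p) hp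
  have db' : ∀ (p : Prop), ¬p → (@decide p (Classical.propDecidable p)) = false :=
    fun p hp => @decide_eq_false p (Classical.propDecidable p) hp
  let pm : E → Equiv.Perm (Fin 4) := fun e => perm4
      (@decide (P.label e ∈ S) (Classical.propDecidable _))
      (@decide (P.init e ∈ S) (Classical.propDecidable _))
      (@decide (P.term e ∈ S) (Classical.propDecidable _))
  refine ⟨⟨fun d => ⟨d.1, pm d.1 d.2⟩, fun d => ⟨d.1, (pm d.1).symm d.2⟩,
      fun d => Sigma.ext rfl (heq_of_eq ((pm d.1).symm_apply_apply d.2)),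
      fun d => Sigma.ext rfl (heq_of_eq ((pm d.1).apply_symm_apply d.2))⟩, ?_⟩
  rintro ⟨e, ⟨iv, hi⟩⟩
  have hi4 : iv < 4 := by simpa [flipWord, LOG.relWord] using hi
  simp only [Equiv.coe_fn_mk, pm]
  erw [Equiv.coe_fn_mk]
  dsimp only
  rcases Classical.em (P.label e ∈ S) with hr | hr <;>
    (first
      | (obtain ⟨h1, h2⟩ := (hcase e).1 hr; rw [db _ hr])
      | (obtain ⟨h1, h2⟩ := (hcase e).2 hr; rw [db' _ hr])) <;>
  rcases Classical.em (P.init e ∈ S) with ha | ha <;>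
    (first | rw [db _ ha] | rw [db' _ ha]) <;>
  rcases Classical.em (P.term e ∈ S) with hc | hc <;>
    (first | rw [db _ hc] | rw [db' _ hc]) <;>
  interval_cases iv <;>
    (simp [whitehead, flipWord, LOG.relWord, perm4, tbl4, mkP4, hr, ha, hc, h1, h2, hlab,
      (show ((0:Fin 4):ℕ) = 0 from rfl), (show ((1:Fin 4):ℕ) = 1 from rfl),
      (show ((2:Fin 4):ℕ) = 2 from rfl), (show ((3:Fin 4):ℕ) = 3 from rfl), -Fin.isValue, -Fin.zero_eta, -Fin.mk_one, -Fin.mk_zero]) <;>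
    (first | exact Sym2.eq_swap | rfl)

end P1

/-- **The Whitehead graphs of `P_S` and `Q` agree.**
Let `P` be a labeled oriented tree whose maximal proper sub-LOTs `T₁, …, Tₙ` are pairwise
disjoint, with union `T`, and assume `P` is injective relative to `T`.  Let `Q` be a
reorientation of `P` in which only edges of `P − T` are reversed, and let `S` be the set
of labels of the reversed edges (so each element of `S` occurs exactly once as an edge
label in `P`).  Let `P_S` be obtained from the LOT presentation `P` by inverting all
occurrences of generators in `S` in every relator.  Then `W(P_S) = W(Q)`, and moreover
`W((P/T)_S) = W(Q/T)`, as multigraphs. -/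
theorem whitehead_flip_eq_reorient {V E : Type} [Fintype V] [Fintype E] {n : ℕ}
    (P Q : LOG V E) (htree : P.IsTreeGraph)
    (VS : Fin n → Set V) (ES : Fin n → Set E)
    (hmax : ∀ i, P.IsMaxProperSubLOT (VS i) (ES i))
    (hcompl : ∀ VS' ES', P.IsMaxProperSubLOT VS' ES' → ∃ i, VS' = VS i ∧ ES' = ES i)
    (hdisj : ∀ i j, i ≠ j → VS i ∩ VS j = ∅)
    (hrelinj : P.RelInjective VS ES)
    (hreor : IsReorientation P Q)
    (hfixT : ∀ e ∈ ⋃ i, ES i, Q.init e = P.init e ∧ Q.term e = P.term e)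
    (S : Set V)
    (hS : S = P.label '' { e | ¬(Q.init e = P.init e ∧ Q.term e = P.term e) })
    (hSonce : ∀ x ∈ S, ∃! e, P.label e = x) :
    MGEquiv (whitehead fun e => flipWord S (P.relWord e)) (whitehead Q.relWord) ∧
      MGEquiv (whitehead fun k => flipWord S (relPTgen P.relWord VS k))
        (whitehead (relPTgen Q.relWord VS)) := by
  constructor
  · exact part1 P Q S hreor hS hSonce
  · have hL : (fun k => flipWord S (relPTgen P.relWord VS k))
        = Sum.elim (fun e => flipWord S (P.relWord e))
            (fun w : Σ i : Fin n, ZWords (VS i) => flipWord S w.2.1) :=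
      funext fun k => by cases k <;> rfl
    have hR : relPTgen Q.relWord VS
        = Sum.elim Q.relWord (fun w : Σ i : Fin n, ZWords (VS i) => w.2.1) :=
      funext fun k => by cases k <;> rfl
    rw [hL, hR]
    exact mgequiv_whitehead_sum (part1 P Q S hreor hS hSonce) (part_inr S VS)
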